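/- Let G be the directed graph on the eleven vertices {U, X₀, X₁, X₂, D₁, D₂, o₁, o₂, Δ₁, Δ₂, E₁} with edge set {(U,D₁), (U,D₂), (U,X₀), (U,X₁), (U,X₂), (X₀,Δ₁), (X₀,Δ₂), (X₁,Δ₁), (X₁,Δ₂), (X₂,Δ₂), (X₀,D₁), (X₁,D₁), (X₀,D₂), (X₁,D₂), (X₂,D₂), (X₀,X₁), (X₁,X₂), (E₁,Δ₁), (E₁,Δ₂), (o₁,D₂), (o₁,Δ₁), (o₁,Δ₂), (o₂,Δ₂)}. (This is the pruned Δ-SWIG of the three-period staggered difference-in-differences model without treatment–covariate feedback: U is the unobserved time-invariant confounder with additively separable effect, X₀, X₁, X₂ are time-varying covariates, D₁ and D₂ = D₂(0) are the random parts of the split treatment nodes with fixed parts o₁ and o₂, E₁ = U_{Y₁} is the exogenous noise of the period-1 outcome, and Δ₁ = ΔY₁(0), Δ₂ = ΔY₂(0,0) are the difference nodes of untreated potential outcomes.) Then in G: (i) {Δ₁} and {D₁, D₂} are d-separated by {X₀, X₁, o₁, o₂}, and also by {X₀, X₁, X₂, o₁, o₂}; (ii) {Δ₂} and {D₁, D₂}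 are d-separated by {X₀, X₁, X₂, o₁, o₂}. -/
import Mathlib


/-! ## Directed graphs, paths, d-separation -/

namespace DeltaSwig

variable {V : Type*}

/-- `b` is a descendant of `a`: reachable from `a` by a nonempty directed path. -/
def Descendant (E : V → V → Prop) (a b : V) : Prop := Relation.TransGen E a b

/-- A directed graph is a DAG if no vertex is related to itself by the
transitive closure of the edge relation. -/
def IsDAG (E : V → V → Prop) : Prop := ∀ v : V, ¬ Relation.TransGen E v v

/-- A path of length `k ≥ 1` between `v 0` and `v k`: pairwise distinct vertices,
consecutive vertices joined by an edge in either direction. -/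
structure IsPath (E : V → V → Prop) (k : ℕ) (v : ℕ → V) : Prop where
  one_le : 1 ≤ k
  inj : ∀ i ≤ k, ∀ j ≤ k, v i = v j → i = j
  adj : ∀ i < k, E (v i) (v (i + 1)) ∨ E (v (i + 1)) (v i)

/-- The interior vertex `v j` is a collider on the path `v`. -/
def IsCollider (E : V → V → Prop) (v : ℕ → V) (j : ℕ) : Prop :=
  E (v (j - 1)) (v j) ∧ E (v (j + 1)) (v j)

/-- The path `v` (of length `k`) is blocked by the set `Z`. -/
def Blocked (E : V → V → Prop) (k : ℕ) (v : ℕ → V) (Z : Set V) : Prop :=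
  ∃ j, 0 < j ∧ j < k ∧
    ((¬ IsCollider E v j ∧ v j ∈ Z) ∨
      (IsCollider E v j ∧ v j ∉ Z ∧ ∀ w, Descendant E (v j) w → w ∉ Z))

/-- `X` and `Y` are d-separated by `Z`: every path from a vertex of `X` to a
vertex of `Y` is blocked by `Z`. -/
def DSep (E : V → V → Prop) (X Y Z : Set V) : Prop :=
  ∀ (k : ℕ) (v : ℕ → V), IsPath E k v → v 0 ∈ X → v k ∈ Y → Blocked E k v Z

/-- Restriction of an edge relation to a set of kept vertices (vertex deletion). -/
def restrictEdge (E : V → V → Prop) (K : Set V) : V → V → Prop :=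
  fun a b => E a b ∧ a ∈ K ∧ b ∈ K

/-- The parents of a vertex. -/
def parents (E : V → V → Prop) (v : V) : Set V := {w | E w v}

end DeltaSwig

namespace DeltaSwig

/-- Vertices of the pruned Δ-SWIG of the three-period staggered
difference-in-differences model. -/
inductive V14 : Type
  | U | X0 | X1 | X2 | D1 | D2 | o1 | o2 | Δ1 | Δ2 | E1
  deriving DecidableEq

open V14 in
/-- Edges of the pruned three-period Δ-SWIG without treatment–covariate
feedback. -/
def E14 : V14 → V14 → Prop := fun a b =>
  (a, b) ∈ ([(U, D1), (U, D2), (U, X0), (U, X1), (U, X2),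
    (X0, Δ1), (X0, Δ2), (X1, Δ1), (X1, Δ2), (X2, Δ2),
    (X0, D1), (X1, D1), (X0, D2), (X1, D2), (X2, D2),
    (X0, X1), (X1, X2),
    (E1, Δ1), (E1, Δ2),
    (o1, D2), (o1, Δ1), (o1, Δ2), (o2, Δ2)] : List (V14 × V14))


open V14 in
lemma noOutΔ1 : ∀ b, ¬ E14 Δ1 b := by intro b h; cases b <;> simp [E14] at h

open V14 in
lemma noOutΔ2 : ∀ b, ¬ E14 Δ2 b := by intro b h; cases b <;> simp [E14] at h

open V14 in
lemma noInE1 : ∀ a, ¬ E14 a E1 := by intro a h; cases a <;> simp [E14] at h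

lemma noDesc {a : V14} (h : ∀ b, ¬ E14 a b) : ∀ w, ¬ Descendant E14 a w := by
  intro w hw
  induction hw with
  | single h' => exact h _ h'
  | tail _ h' ih => exact ih

open V14 in
lemma dsep_aux (X : V14) (Z : Set V14)
    (hX : X = Δ1 ∨ X = Δ2)
    (hpar : ∀ a, E14 a X → a ≠ E1 → a ∈ Z)
    (hD1 : D1 ∉ Z) (hD2 : D2 ∉ Z) (hΔ1 : Δ1 ∉ Z) (hΔ2 : Δ2 ∉ Z) :
    DSep E14 {X} {D1, D2} Z := by
  have hnoout : ∀ b, ¬ E14 X b := by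
    rcases hX with rfl | rfl
    exacts [noOutΔ1, noOutΔ2]
  intro k v hp h0 hk
  have h0' : v 0 = X := h0
  have hk0 : 0 < k := hp.one_le
  have h1 : E14 (v 1) (v 0) := by
    rcases hp.adj 0 hk0 with h | h
    · rw [h0'] at h; exact absurd h (hnoout _)
    · exact h
  rw [h0'] at h1
  by_cases hE : v 1 = E1
  · -- path goes through E1; next vertex is a Δ node, a blocking collider
    have hk1 : 1 < k := by
      rcases Nat.lt_or_ge 1 k with h | h
      · exact h
      · have hk1' : k = 1 := le_antisymm h hp.one_le
        rw [hk1', hE] at hk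
        simp [Set.mem_insert_iff] at hk
    have h2 : E14 E1 (v 2) := by
      rcases hp.adj 1 hk1 with h | h
      · rwa [hE] at h
      · rw [hE] at h; exact absurd h (noInE1 _)
    have hv2 : v 2 = Δ1 ∨ v 2 = Δ2 := by
      cases h : v 2 <;> rw [h] at h2 <;> simp [E14] at h2 <;> simp
    have hnoout2 : ∀ b, ¬ E14 (v 2) b := by
      rcases hv2 with h | h <;> rw [h]
      exacts [noOutΔ1, noOutΔ2]
    have hk2 : 2 < k := by
      rcases Nat.lt_or_ge 2 k with h | h
      · exact h
      · have hk2' : k = 2 := le_antisymm h hk1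
        rw [hk2'] at hk
        rcases hv2 with h' | h' <;> rw [h'] at hk <;>
          simp [Set.mem_insert_iff] at hk
    have h3 : E14 (v 3) (v 2) := by
      rcases hp.adj 2 hk2 with h | h
      · exact absurd h (hnoout2 _)
      · exact h
    refine ⟨2, by norm_num, hk2, Or.inr ⟨⟨?_, ?_⟩, ?_, ?_⟩⟩
    · show E14 (v (2 - 1)) (v 2)
      rw [show (2 : ℕ) - 1 = 1 from rfl, hE]; exact h2
    · exact h3
    · rcases hv2 with h | h <;> rw [h] <;> assumption
    · intro w hw; exact absurd hw (noDesc hnoout2 w)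
  · -- v 1 is a parent of X in Z: blocking non-collider
    have hZ1 : v 1 ∈ Z := hpar _ h1 hE
    have hk1 : 1 < k := by
      rcases Nat.lt_or_ge 1 k with h | h
      · exact h
      · have hk1' : k = 1 := le_antisymm h hp.one_le
        rw [hk1'] at hk
        rcases hk with h' | h'
        · exact absurd hZ1 (h' ▸ hD1)
        · exact absurd hZ1 (Set.mem_singleton_iff.mp h' ▸ hD2)
    refine ⟨1, one_pos, hk1, Or.inl ⟨?_, hZ1⟩⟩
    rintro ⟨hc, -⟩
    rw [show (1 : ℕ) - 1 = 0 from rfl, h0'] at hc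
    exact hnoout _ hc

open V14 in
/-- **three-period Δ-SWIG without treatment–covariate
feedback.** In the pruned Δ-SWIG: (i) `{Δ₁}` and `{D₁, D₂}` are d-separated
by `{X₀, X₁, o₁, o₂}`, and also by `{X₀, X₁, X₂, o₁, o₂}`; (ii) `{Δ₂}` and
`{D₁, D₂}` are d-separated by `{X₀, X₁, X₂, o₁, o₂}`. -/
theorem deltaSWIG_three_periods :
    DSep E14 {Δ1} {D1, D2} {X0, X1, o1, o2} ∧
    DSep E14 {Δ1} {D1, D2} {X0, X1, X2, o1, o2} ∧
    DSep E14 {Δ2} {D1, D2} {X0, X1, X2, o1, o2} := by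
  refine ⟨?_, ?_, ?_⟩
  · exact dsep_aux Δ1 _ (Or.inl rfl)
      (by intro a h h'; cases a <;> simp [E14] at h <;> first | exact absurd rfl h' | simp)
      (by simp) (by simp) (by simp) (by simp)
  · exact dsep_aux Δ1 _ (Or.inl rfl)
      (by intro a h h'; cases a <;> simp [E14] at h <;> first | exact absurd rfl h' | simp)
      (by simp) (by simp) (by simp) (by simp)
  · exact dsep_aux Δ2 _ (Or.inr rfl)
      (by intro a h h'; cases a <;> simp [E14] at h <;> first | exact absurd rfl h' | simp)
      (by simp) (by simp) (by simp) (by simp)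

end DeltaSwig
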